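/- Fix λ, μ ∈ ℝ with 2π ≤ λ ≤ 2μ, and let M(λ,μ) be the 4×4 real matrix (1/4)·[[1+e^{−λ}−2e^{−μ}, 1+e^{−λ}+2e^{−μ}, 1−e^{−λ}, 1−e^{−λ}], [1+e^{−λ}+2e^{−μ}, 1+e^{−λ}−2e^{−μ}, 1−e^{−λ}, 1−e^{−λ}], [1−e^{−λ}, 1−e^{−λ}, 1+e^{−λ}−2e^{−μ}, 1+e^{−λ}+2e^{−μ}], [1−e^{−λ}, 1−e^{−λ}, 1+e^{−λ}+2e^{−μ}, 1+e^{−λ}−2e^{−μ}]]. Then M(λ,μ) is an embeddable Markov matrix (there exists a rate matrix Q with exp(Q) = M(λ,μ)), but there is no rate matrix with K3 form whose exponential equals M(λ,μ). In particular, embeddability of a K3 Markov matrix does not imply K3-embeddability. -/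

import Mathlib

open Real

/-- The Kimura 3ST matrix `K(a,b,c,d)`. -/
def K {α : Type*} (a b c d : α) : Matrix (Fin 4) (Fin 4) α :=
  !![a, b, c, d;
     b, a, d, c;
     c, d, a, b;
     d, c, b, a]

/-- A Markov matrix: nonnegative entries, rows sum to 1. -/
def IsMarkov {k : ℕ} (M : Matrix (Fin k) (Fin k) ℝ) : Prop :=
  (∀ i j, 0 ≤ M i j) ∧ ∀ i, ∑ j, M i j = 1

/-- A rate matrix: nonnegative off-diagonal entries, rows sum to 0. -/
def IsRate {k : ℕ} (Q : Matrix (Fin k) (Fin k) ℝ) : Prop :=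
  (∀ i j, i ≠ j → 0 ≤ Q i j) ∧ ∀ i, ∑ j, Q i j = 0

/-- The matrix `M(λ,μ)`. -/
noncomputable def Mlm (l m : ℝ) : Matrix (Fin 4) (Fin 4) ℝ :=
  (1 / 4 : ℝ) •
    !![1 + exp (-l) - 2 * exp (-m), 1 + exp (-l) + 2 * exp (-m), 1 - exp (-l), 1 - exp (-l);
       1 + exp (-l) + 2 * exp (-m), 1 + exp (-l) - 2 * exp (-m), 1 - exp (-l), 1 - exp (-l);
       1 - exp (-l), 1 - exp (-l), 1 + exp (-l) - 2 * exp (-m), 1 + exp (-l) + 2 * exp (-m);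
       1 - exp (-l), 1 - exp (-l), 1 + exp (-l) + 2 * exp (-m), 1 + exp (-l) - 2 * exp (-m)]

/-! ### Auxiliary material -/

namespace Stmt12Aux

open Complex (I)

/-! #### Scalar exponential lemmas -/

lemma cexp_eq (z : ℂ) : NormedSpace.exp z = Complex.exp z :=
  (congrFun Complex.exp_eq_exp_ℂ z).symm

lemma rexp_eq (x : ℝ) : NormedSpace.exp x = Real.exp x :=
  (congrFun Real.exp_eq_exp_ℝ x).symm

lemma cexp_neg_real (m : ℝ) : Complex.exp (-(m:ℂ)) = (Real.exp (-m) : ℂ) := by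
  rw [show -(m:ℂ) = ((-m : ℝ) : ℂ) by push_cast; ring, ← Complex.ofReal_exp]

lemma key1 (m : ℝ) : Complex.exp (-(m:ℂ) + π*I) = -(Real.exp (-m) : ℂ) := by
  rw [Complex.exp_add, Complex.exp_pi_mul_I, cexp_neg_real]; ring

lemma key2 (m : ℝ) : Complex.exp (-(m:ℂ) - π*I) = -(Real.exp (-m) : ℂ) := by
  rw [Complex.exp_sub, Complex.exp_pi_mul_I, cexp_neg_real]; ring

/-! #### The complex diagonalizing matrices -/

noncomputable def Pm : Matrix (Fin 4) (Fin 4) ℂ :=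
  !![1, 1, 1-I, 1+I;
     1, 1, -1+I, -1-I;
     1, -1, 1+I, 1-I;
     1, -1, -1-I, -1+I]

noncomputable def Rm : Matrix (Fin 4) (Fin 4) ℂ :=
  !![1/4, 1/4, 1/4, 1/4;
     1/4, 1/4, -(1/4), -(1/4);
     (1+I)/8, (-1-I)/8, (1-I)/8, (-1+I)/8;
     (1-I)/8, (-1+I)/8, (1+I)/8, (-1-I)/8]

lemma hPR : Pm * Rm = 1 := by
  ext i j
  fin_cases i <;> fin_cases j <;>
    simp [Pm, Rm, Matrix.mul_apply, Fin.sum_univ_four, Matrix.one_apply] <;>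
    ring_nf <;> simp [Complex.I_sq] <;> ring_nf

lemma hRP : Rm * Pm = 1 := mul_eq_one_comm.mp hPR

lemma hPunit : IsUnit Pm := ⟨⟨Pm, Rm, hPR, hRP⟩, rfl⟩

lemma hPinv : Pm⁻¹ = Rm := Matrix.inv_eq_right_inv hPR

/-! #### The generator and its diagonalization -/

noncomputable def Qgen (l m : ℝ) : Matrix (Fin 4) (Fin 4) ℝ :=
  (1 / 4 : ℝ) •
    !![-(l+2*m), 2*m-l, l+2*π, l-2*π;
       2*m-l, -(l+2*m), l-2*π, l+2*π;
       l-2*π, l+2*π, -(l+2*m), 2*m-l;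
       l+2*π, l-2*π, 2*m-l, -(l+2*m)]

noncomputable def Dm (l m : ℝ) : Matrix (Fin 4) (Fin 4) ℂ :=
  !![0, 0, 0, 0;
     0, (-l : ℂ), 0, 0;
     0, 0, -m + π*I, 0;
     0, 0, 0, -m - π*I]

lemma hDdiag (l m : ℝ) : Dm l m = Matrix.diagonal ![0, (-l : ℂ), -m + π*I, -m - π*I] := by
  ext i j
  fin_cases i <;> fin_cases j <;> simp [Dm, Matrix.diagonal_apply] <;> rfl

set_option maxHeartbeats 1000000 in
lemma hQdecomp (l m : ℝ) : (Qgen l m).map Complex.ofReal = Pm * Dm l m * Rm := by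
  ext i j
  fin_cases i <;> fin_cases j <;>
    simp [Qgen, Pm, Rm, Dm, Matrix.mul_apply, Fin.sum_univ_four, Matrix.map_apply] <;>
    ring_nf <;> simp [Complex.I_sq] <;> ring_nf

noncomputable def Em (l m : ℝ) : Matrix (Fin 4) (Fin 4) ℂ :=
  !![1, 0, 0, 0;
     0, (Real.exp (-l) : ℂ), 0, 0;
     0, 0, -(Real.exp (-m) : ℂ), 0;
     0, 0, 0, -(Real.exp (-m) : ℂ)]

lemma hEdiag (l m : ℝ) :
    Em l m = Matrix.diagonal
      ![1, (Real.exp (-l) : ℂ), -(Real.exp (-m) : ℂ), -(Real.exp (-m) : ℂ)] := by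
  ext i j
  fin_cases i <;> fin_cases j <;> simp [Em, Matrix.diagonal_apply] <;> rfl

lemma hexpD (l m : ℝ) :
    NormedSpace.exp (Matrix.diagonal ![0, (-l : ℂ), -m + π*I, -m - π*I]) = Em l m := by
  rw [Matrix.exp_diagonal, hEdiag]
  have hv : NormedSpace.exp (![0, (-l:ℂ), -m+π*I, -m-π*I] : Fin 4 → ℂ) =
      ![1, (Real.exp (-l) : ℂ), -(Real.exp (-m) : ℂ), -(Real.exp (-m) : ℂ)] := by
    rw [Pi.exp_def]
    funext i
    fin_cases i <;>
      simp only [Matrix.cons_val_zero, Matrix.cons_val_one, Matrix.head_cons,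
        Matrix.cons_val_two, Matrix.cons_val_three, Matrix.tail_cons, Fin.mk_one,
        Fin.isValue, cexp_eq]
    · exact Complex.exp_zero
    · exact cexp_neg_real l
    · exact key1 m
    · exact key2 m
  rw [hv]

set_option maxHeartbeats 1000000 in
lemma hMdecomp (l m : ℝ) : Pm * Em l m * Rm = (Mlm l m).map Complex.ofReal := by
  ext i j
  fin_cases i <;> fin_cases j <;>
    simp [Mlm, Pm, Rm, Em, Matrix.mul_apply, Fin.sum_univ_four, Matrix.map_apply,
      Matrix.smul_apply, smul_eq_mul, Matrix.vecHead, Matrix.vecTail] <;>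
    ring_nf <;> simp [Complex.I_sq] <;> ring_nf

/-! #### Moving `exp` across the complexification -/

lemma exp_map_ofReal (A : Matrix (Fin 4) (Fin 4) ℝ) :
    (NormedSpace.exp A).map Complex.ofReal = NormedSpace.exp (A.map Complex.ofReal) := by
  letI : SeminormedRing (Matrix (Fin 4) (Fin 4) ℝ) := Matrix.linftyOpSemiNormedRing
  letI : NormedRing (Matrix (Fin 4) (Fin 4) ℝ) := Matrix.linftyOpNormedRing
  letI : NormedAlgebra ℝ (Matrix (Fin 4) (Fin 4) ℝ) := Matrix.linftyOpNormedAlgebra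
  letI : SeminormedRing (Matrix (Fin 4) (Fin 4) ℂ) := Matrix.linftyOpSemiNormedRing
  letI : NormedRing (Matrix (Fin 4) (Fin 4) ℂ) := Matrix.linftyOpNormedRing
  letI : NormedAlgebra ℝ (Matrix (Fin 4) (Fin 4) ℂ) := Matrix.linftyOpNormedAlgebra
  letI : NormedAlgebra ℚ (Matrix (Fin 4) (Fin 4) ℝ) := Matrix.linftyOpNormedAlgebra
  letI : NormedAlgebra ℚ (Matrix (Fin 4) (Fin 4) ℂ) := Matrix.linftyOpNormedAlgebra
  exact NormedSpace.map_exp (Complex.ofRealHom.mapMatrix : Matrix (Fin 4) (Fin 4) ℝ →+* _)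
    (Continuous.matrix_map continuous_id Complex.continuous_ofReal) A

/-- The main exponential computation. -/
lemma exp_Qgen (l m : ℝ) : NormedSpace.exp (Qgen l m) = Mlm l m := by
  refine Matrix.map_injective Complex.ofReal_injective ?_
  show (NormedSpace.exp (Qgen l m)).map Complex.ofReal = (Mlm l m).map Complex.ofReal
  rw [exp_map_ofReal, hQdecomp, ← hPinv, Matrix.exp_conj Pm (Dm l m) hPunit,
    hDdiag, hexpD, hPinv, hMdecomp]

/-! #### The real Hadamard diagonalization of K3 matrices -/

def Hd : Matrix (Fin 4) (Fin 4) ℝ :=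
  !![1, 1, 1, 1;
     1, 1, -1, -1;
     1, -1, 1, -1;
     1, -1, -1, 1]

noncomputable def Hi : Matrix (Fin 4) (Fin 4) ℝ :=
  !![1/4, 1/4, 1/4, 1/4;
     1/4, 1/4, -(1/4), -(1/4);
     1/4, -(1/4), 1/4, -(1/4);
     1/4, -(1/4), -(1/4), 1/4]

lemma hHHi : Hd * Hi = 1 := by
  ext i j
  fin_cases i <;> fin_cases j <;>
    simp [Hd, Hi, Matrix.mul_apply, Fin.sum_univ_four, Matrix.one_apply,
      Matrix.vecHead, Matrix.vecTail] <;> norm_num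

lemma hHiH : Hi * Hd = 1 := mul_eq_one_comm.mp hHHi

lemma hHunit : IsUnit Hd := ⟨⟨Hd, Hi, hHHi, hHiH⟩, rfl⟩

lemma hHinv : Hd⁻¹ = Hi := Matrix.inv_eq_right_inv hHHi

def Dg (x y z w : ℝ) : Matrix (Fin 4) (Fin 4) ℝ :=
  !![x, 0, 0, 0;
     0, y, 0, 0;
     0, 0, z, 0;
     0, 0, 0, w]

lemma hDgdiag (x y z w : ℝ) : Dg x y z w = Matrix.diagonal ![x, y, z, w] := by
  ext i j
  fin_cases i <;> fin_cases j <;> simp [Dg, Matrix.diagonal_apply] <;> rfl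

set_option maxHeartbeats 1000000 in
lemma hKdecomp (a b c d : ℝ) :
    K a b c d = Hd * Dg (a+b+c+d) (a+b-c-d) (a-b+c-d) (a-b-c+d) * Hi := by
  ext i j
  fin_cases i <;> fin_cases j <;>
    simp [K, Hd, Hi, Dg, Matrix.mul_apply, Fin.sum_univ_four,
      Matrix.vecHead, Matrix.vecTail] <;> ring

lemma exp_K (a b c d : ℝ) :
    NormedSpace.exp (K a b c d) =
      Hd * Dg (Real.exp (a+b+c+d)) (Real.exp (a+b-c-d)) (Real.exp (a-b+c-d))
        (Real.exp (a-b-c+d)) * Hi := by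
  have hv : NormedSpace.exp (![a+b+c+d, a+b-c-d, a-b+c-d, a-b-c+d] : Fin 4 → ℝ) =
      ![Real.exp (a+b+c+d), Real.exp (a+b-c-d), Real.exp (a-b+c-d), Real.exp (a-b-c+d)] := by
    rw [Pi.exp_def]
    funext i
    fin_cases i <;> simp [rexp_eq]
  rw [hKdecomp, ← hHinv, Matrix.exp_conj Hd _ hHunit, hDgdiag, Matrix.exp_diagonal, hv,
    hHinv, hDgdiag]

set_option maxHeartbeats 2000000 in
lemma no_K3 (l m a b c d : ℝ)
    (hexp : NormedSpace.exp (K a b c d) = Mlm l m) : False := by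
  rw [exp_K] at hexp
  have h0 := congrFun (congrFun hexp 0) 0
  have h1 := congrFun (congrFun hexp 0) 1
  have h2 := congrFun (congrFun hexp 0) 2
  have h3 := congrFun (congrFun hexp 0) 3
  simp [Hd, Hi, Dg, Mlm, Matrix.mul_apply,
    Fin.sum_univ_four, Matrix.smul_apply, smul_eq_mul,
    Matrix.vecHead, Matrix.vecTail] at h0 h1 h2 h3
  linarith [Real.exp_pos (a - b + c - d), Real.exp_pos (-m), h0, h1, h2, h3]

end Stmt12Aux

/-- If `2π ≤ λ ≤ 2μ`, then `M(λ,μ)` is an embeddable Markov matrix, but it has no Markov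
generator with K3 form: embeddability does not imply K3-embeddability. -/
theorem stmt_12 (l m : ℝ) (h1 : 2 * π ≤ l) (h2 : l ≤ 2 * m) :
    IsMarkov (Mlm l m) ∧
    (∃ Q : Matrix (Fin 4) (Fin 4) ℝ, IsRate Q ∧ NormedSpace.exp Q = Mlm l m) ∧
    ¬∃ Q : Matrix (Fin 4) (Fin 4) ℝ, IsRate Q ∧ (∃ a b c d : ℝ, Q = K a b c d) ∧
      NormedSpace.exp Q = Mlm l m := by
  have hpi : (3:ℝ) < π := Real.pi_gt_three
  have hl0 : 0 < l := by linarith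
  have hm1 : (1:ℝ) ≤ m := by linarith
  have hel : exp (-l) ≤ 1 := by
    rw [show (1:ℝ) = exp 0 by simp]
    exact Real.exp_le_exp.mpr (by linarith)
  have hel0 : 0 < exp (-l) := Real.exp_pos _
  have hem0 : 0 < exp (-m) := Real.exp_pos _
  have hem : 2 * exp (-m) < 1 := by
    have ha : exp (-m) ≤ exp (-1) := Real.exp_le_exp.mpr (by linarith)
    have hb : exp (-1) < 1/2 := by
      have hc : (2:ℝ) < exp 1 := by linarith [Real.exp_one_gt_d9]
      have hd : exp (-1) * exp 1 = 1 := by rw [← Real.exp_add]; simp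
      nlinarith [Real.exp_pos (-1)]
    linarith
  refine ⟨⟨?_, ?_⟩, ⟨Stmt12Aux.Qgen l m, ⟨?_, ?_⟩, Stmt12Aux.exp_Qgen l m⟩, ?_⟩
  · intro i j
    fin_cases i <;> fin_cases j <;>
      simp [Mlm, Matrix.smul_apply, smul_eq_mul, Matrix.vecHead, Matrix.vecTail] <;>
      linarith
  · intro i
    fin_cases i <;>
      simp [Mlm, Fin.sum_univ_four, Matrix.smul_apply, smul_eq_mul,
        Matrix.vecHead, Matrix.vecTail] <;>
      ring
  · intro i j hij
    fin_cases i <;> fin_cases j <;>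
      simp_all [Stmt12Aux.Qgen, Matrix.smul_apply, smul_eq_mul,
        Matrix.vecHead, Matrix.vecTail] <;>
      linarith
  · intro i
    fin_cases i <;>
      simp [Stmt12Aux.Qgen, Fin.sum_univ_four, Matrix.smul_apply, smul_eq_mul,
        Matrix.vecHead, Matrix.vecTail] <;>
      ring
  · rintro ⟨Q, hrate, ⟨a, b, c, d, rfl⟩, hexp⟩
    exact Stmt12Aux.no_K3 l m a b c d hexp
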